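/- Let n ∈ ℕ (n ≥ 1) and let I be a proper open subinterval of ℝ. Suppose f : I → ℝ is Wright convex of order n, g : I → ℝ is continuous, and f(x) = g(x) for every rational x ∈ I. Then the difference f − g satisfies the Fréchet functional equation of order n on I: Δ_h^{n+1}(f − g)(x) = 0 for all h > 0 and all x ∈ I ∩ (I − (n+1)h). -/

import Mathlib

open Finset

/-- The difference operator `Δ_h`. -/
noncomputable def dOp (h : ℝ) (f : ℝ → ℝ) : ℝ → ℝ := fun x => f (x + h) - f x

/-- Iterated difference operator `Δ_{h_1} ⋯ Δ_{h_k}` for a list `[h_1, …, h_k]`. -/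
noncomputable def dList (l : List ℝ) (f : ℝ → ℝ) : ℝ → ℝ := l.foldr dOp f

/-- The divided difference `[x_0, …, x_m; f]`. -/
noncomputable def divDiff (m : ℕ) (x : Fin (m + 1) → ℝ) (f : ℝ → ℝ) : ℝ :=
  ∑ i, f (x i) / ∏ j ∈ Finset.univ.erase i, (x i - x j)

/-- `I` is a proper open subinterval of the real line. -/
def ProperOpenInterval (I : Set ℝ) : Prop :=
  IsOpen I ∧ I.OrdConnected ∧ I.Nonempty ∧ I ≠ Set.univ

/-- A real number which is rational. -/
def IsRatR (x : ℝ) : Prop := ∃ q : ℚ, (q : ℝ) = x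

/-- `f` is Wright convex of order `n` on `I`. -/
def WrightConvexOrder (n : ℕ) (I : Set ℝ) (f : ℝ → ℝ) : Prop :=
  ∀ l : List ℝ, l.length = n + 1 → (∀ h ∈ l, 0 < h) →
    ∀ x : ℝ, x ∈ I → x + l.sum ∈ I → 0 ≤ dList l f x

/-- `f` is Jensen convex of order `n` on `I`. -/
def JensenConvexOrder (n : ℕ) (I : Set ℝ) (f : ℝ → ℝ) : Prop :=
  ∀ h : ℝ, 0 < h → ∀ x : ℝ, x ∈ I → x + (n + 1) * h ∈ I → 0 ≤ (dOp h)^[n + 1] f x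

/-- `f` is convex of order `n` on `I`. -/
def ConvexOrder (n : ℕ) (I : Set ℝ) (f : ℝ → ℝ) : Prop :=
  ∀ x : Fin (n + 2) → ℝ, Function.Injective x → (∀ i, x i ∈ I) →
    0 ≤ divDiff (n + 1) x f

lemma dList_cons (a : ℝ) (l : List ℝ) (f : ℝ → ℝ) :
    dList (a :: l) f = dOp a (dList l f) := rfl

lemma dOp_comm (a b : ℝ) (f : ℝ → ℝ) : dOp a (dOp b f) = dOp b (dOp a f) := by
  funext x; simp only [dOp]; ring

lemma dList_dOp (l : List ℝ) (a : ℝ) (f : ℝ → ℝ) :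
    dList l (dOp a f) = dOp a (dList l f) := by
  induction l with
  | nil => rfl
  | cons b l ih => simp only [dList_cons, ih, dOp_comm]

lemma dList_append_singleton (l : List ℝ) (a : ℝ) (f : ℝ → ℝ) :
    dList (l ++ [a]) f = dList l (dOp a f) := by
  simp only [dList, List.foldr_append]
  rfl

lemma dList_sub (l : List ℝ) (f g : ℝ → ℝ) :
    dList l (fun y => f y - g y) = fun y => dList l f y - dList l g y := by
  induction l with
  | nil => rfl
  | cons a l ih => funext x; simp only [dList_cons, ih, dOp]; ring

lemma dList_continuousOn (I : Set ℝ) (hord : I.OrdConnected) (g : ℝ → ℝ)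
    (hg : ContinuousOn g I) :
    ∀ l : List ℝ, (∀ h ∈ l, 0 ≤ h) →
      ContinuousOn (dList l g) {z | z ∈ I ∧ z + l.sum ∈ I} := by
  intro l
  induction l with
  | nil =>
    intro _
    exact hg.mono (fun z hz => hz.1)
  | cons a l ih =>
    intro hpos
    have ha : 0 ≤ a := hpos a (by simp)
    have hsum : 0 ≤ l.sum := List.sum_nonneg (fun x hx => hpos x (by simp [hx]))
    have h1 : ContinuousOn (fun z => dList l g (z + a))
        {z | z ∈ I ∧ z + (a :: l).sum ∈ I} := by
      apply (ih (fun x hx => hpos x (by simp [hx]))).comp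
        ((continuous_add_right a).continuousOn)
      intro z hz
      obtain ⟨hz1, hz2⟩ := hz
      have hz2' : z + (a + l.sum) ∈ I := by simpa [List.sum_cons] using hz2
      refine ⟨?_, ?_⟩
      · show z + a ∈ I
        exact hord.out hz1 hz2' ⟨by linarith, by linarith⟩
      · show z + a + l.sum ∈ I
        have : z + a + l.sum = z + (a + l.sum) := by ring
        rw [this]; exact hz2'
    have h2 : ContinuousOn (dList l g) {z | z ∈ I ∧ z + (a :: l).sum ∈ I} := by
      apply (ih (fun x hx => hpos x (by simp [hx]))).mono
      intro z hz
      obtain ⟨hz1, hz2⟩ := hz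
      have hz2' : z + (a + l.sum) ∈ I := by simpa [List.sum_cons] using hz2
      exact ⟨hz1, hord.out hz1 hz2' ⟨by linarith, by linarith⟩⟩
    exact h1.sub h2

/-- Base case -/
lemma base_eq (I : Set ℝ) (hIo : IsOpen I) (f g : ℝ → ℝ)
    (hf : WrightConvexOrder 0 I f) (hg : ContinuousOn g I)
    (hfg : ∀ x ∈ I, IsRatR x → f x = g x) :
    ∀ y ∈ I, f y = g y := by
  intro y hy
  obtain ⟨δ₀, hδ₀pos, hball⟩ := Metric.isOpen_iff.1 hIo y hy
  have hcw : ContinuousWithinAt g I y := hg.continuousWithinAt hy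
  have hmono : ∀ a ∈ I, ∀ b ∈ I, a < b → f a ≤ f b := by
    intro a ha b hb hab
    have hsum : a + [b - a].sum ∈ I := by
      have : a + [b - a].sum = b := by simp
      rw [this]; exact hb
    have h := hf [b - a] (by simp) (by intro h hh; simp at hh; linarith) a ha hsum
    have he : dList [b - a] f a = f b - f a := by
      show f (a + (b - a)) - f a = f b - f a
      have : a + (b - a) = b := by ring
      rw [this]
    rw [he] at h
    linarith
  have h1 : f y ≤ g y := by
    apply le_of_forall_pos_le_add
    intro ε hε
    obtain ⟨δ, hδpos, hδ⟩ := Metric.continuousWithinAt_iff.1 hcw ε hε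
    have hδ'pos : 0 < min δ δ₀ := lt_min hδpos hδ₀pos
    obtain ⟨q, hq1, hq2⟩ := exists_rat_btwn (show y < y + min δ δ₀ by linarith)
    have hd : dist ((q : ℝ)) y < min δ δ₀ := by
      rw [Real.dist_eq, abs_lt]; constructor <;> linarith
    have hqI : (q : ℝ) ∈ I := hball (Metric.mem_ball.2 (lt_of_lt_of_le hd (min_le_right δ δ₀)))
    have hfq : f y ≤ f (q : ℝ) := hmono y hy _ hqI hq1
    have hgq : f (q : ℝ) = g (q : ℝ) := hfg _ hqI ⟨q, rfl⟩
    have hdg : dist (g (q : ℝ)) (g y) < ε :=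
      hδ hqI (lt_of_lt_of_le hd (min_le_left δ δ₀))
    rw [Real.dist_eq, abs_lt] at hdg
    linarith
  have h2 : g y ≤ f y := by
    apply le_of_forall_pos_le_add
    intro ε hε
    obtain ⟨δ, hδpos, hδ⟩ := Metric.continuousWithinAt_iff.1 hcw ε hε
    have hδ'pos : 0 < min δ δ₀ := lt_min hδpos hδ₀pos
    obtain ⟨q, hq1, hq2⟩ := exists_rat_btwn (show y - min δ δ₀ < y by linarith)
    have hd : dist ((q : ℝ)) y < min δ δ₀ := by
      rw [Real.dist_eq, abs_lt]; constructor <;> linarith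
    have hqI : (q : ℝ) ∈ I := hball (Metric.mem_ball.2 (lt_of_lt_of_le hd (min_le_right δ δ₀)))
    have hfq : f (q : ℝ) ≤ f y := hmono _ hqI y hy hq2
    have hgq : f (q : ℝ) = g (q : ℝ) := hfg _ hqI ⟨q, rfl⟩
    have hdg : dist (g (q : ℝ)) (g y) < ε :=
      hδ hqI (lt_of_lt_of_le hd (min_le_left δ δ₀))
    rw [Real.dist_eq, abs_lt] at hdg
    linarith
  linarith

lemma frechet_key : ∀ n : ℕ, ∀ I : Set ℝ, IsOpen I → I.OrdConnected →
    ∀ f g : ℝ → ℝ, WrightConvexOrder n I f → ContinuousOn g I →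
    (∀ x ∈ I, IsRatR x → f x = g x) →
    ∀ l : List ℝ, l.length = n + 1 → (∀ h ∈ l, 0 < h) →
    ∀ x : ℝ, x ∈ I → x + l.sum ∈ I → dList l (fun y => f y - g y) x = 0 := by
  intro n
  induction n with
  | zero =>
    intro I hIo hord f g hf hg hfg l hlen hpos x hx hxs
    have heq := base_eq I hIo f g hf hg hfg
    rcases l with _ | ⟨a, l⟩
    · simp at hlen
    rcases l with _ | ⟨b, t⟩
    · have ha : 0 < a := hpos a (by simp)
      have hxa : x + a ∈ I := by
        have h : x + [a].sum = x + a := by simp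
        rwa [h] at hxs
      show (f (x + a) - g (x + a)) - (f x - g x) = 0
      rw [heq x hx, heq (x + a) hxa]; ring
    · simp at hlen
  | succ n ih =>
    intro I hIo hord f g hf hg hfg l hlen hpos x hx hxs
    rcases l with _ | ⟨h₁, l'⟩
    · simp at hlen
    have hlen' : l'.length = n + 1 := by simpa using hlen
    have hpos' : ∀ h ∈ l', 0 < h := fun h hh => hpos h (by simp [hh])
    have hh₁ : 0 < h₁ := hpos h₁ (by simp)
    have hl'ne : l' ≠ [] := by intro h; rw [h] at hlen'; simp at hlen'
    have hSpos : 0 < l'.sum := List.sum_pos l' hpos' hl'ne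
    set S := l'.sum with hS
    set D : ℝ → ℝ := fun y => f y - g y with hD
    set Φ := dList l' D with hΦ
    set ψ := dList l' g with hψ
    have hxe : x + (h₁ + S) ∈ I := by
      have h : x + (h₁ :: l').sum = x + (h₁ + S) := by rw [List.sum_cons]
      rwa [h] at hxs
    have hmemI : ∀ w : ℝ, x ≤ w → w ≤ x + (h₁ + S) → w ∈ I :=
      fun w hw1 hw2 => hord.out hx hxe ⟨hw1, hw2⟩
    -- F1 : invariance of Φ under rational shifts
    have F1 : ∀ y z : ℝ, y ∈ I → y < z → z + S ∈ I → IsRatR (z - y) → Φ z = Φ y := by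
      rintro y z hyI hyz hzS ⟨q, hq⟩
      set r : ℝ := z - y with hr
      have hrpos : 0 < r := by rw [hr]; linarith
      have hzI : z ∈ I := hord.out hyI hzS ⟨le_of_lt hyz, by linarith⟩
      have hySI : y + S ∈ I := hord.out hyI hzS ⟨by linarith, by linarith⟩
      have hySrI : y + S + r ∈ I := by
        have h : y + S + r = z + S := by rw [hr]; ring
        rw [h]; exact hzS
      have hyrI : y + r ∈ I := by
        have h : y + r = z := by rw [hr]; ring
        rw [h]; exact hzI
      set Ir : Set ℝ := I ∩ (fun w => w + r) ⁻¹' I with hIr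
      have hIrO : IsOpen Ir := hIo.inter (hIo.preimage (continuous_add_right r))
      have hIrOrd : Ir.OrdConnected := by
        refine hord.inter ⟨?_⟩
        intro a ha b hb w hw
        exact hord.out ha hb ⟨(by linarith [hw.1] : a + r ≤ w + r), (by linarith [hw.2] : w + r ≤ b + r)⟩
      have hwr : WrightConvexOrder n Ir (dOp r f) := by
        intro l'' hlen'' hpos'' w hw hws
        rw [← dList_append_singleton]
        refine hf (l'' ++ [r]) (by simp [hlen'']) ?_ w hw.1 ?_
        · intro h hh
          rcases List.mem_append.1 hh with h1 | h1
          · exact hpos'' h h1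
          · simp at h1; rw [h1]; exact hrpos
        · have h : w + (l'' ++ [r]).sum = w + l''.sum + r := by
            simp [List.sum_append]; ring
          rw [h]; exact hws.2
      have hcr : ContinuousOn (dOp r g) Ir :=
        (hg.comp ((continuous_add_right r).continuousOn)
          (fun w hw => hw.2)).sub (hg.mono Set.inter_subset_left)
      have hfgr : ∀ w ∈ Ir, IsRatR w → dOp r f w = dOp r g w := by
        rintro w hw ⟨p, hp⟩
        show f (w + r) - f w = g (w + r) - g w
        have hwr' : IsRatR (w + r) := ⟨p + q, by push_cast; rw [hp, hq, hr]⟩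
        rw [hfg w hw.1 ⟨p, hp⟩, hfg (w + r) hw.2 hwr']
      have hres := ih Ir hIrO hIrOrd (dOp r f) (dOp r g) hwr hcr hfgr l' hlen' hpos'
        y ⟨hyI, hyrI⟩ ⟨hySI, hySrI⟩
      have hfun : (fun w => dOp r f w - dOp r g w) = dOp r D := by
        funext w
        show f (w + r) - f w - (g (w + r) - g w) = (f (w + r) - g (w + r)) - (f w - g w)
        ring
      rw [hfun, dList_dOp] at hres
      have hres' : Φ (y + r) - Φ y = 0 := hres
      have h : y + r = z := by rw [hr]; ring
      rw [h] at hres'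
      linarith
    -- F2 : one-sided Wright bound
    have F2 : ∀ y z : ℝ, y ∈ I → y < z → z + S ∈ I → ψ y - ψ z ≤ Φ z - Φ y := by
      intro y z hyI hyz hzS
      have hmem : y + ((z - y) :: l').sum ∈ I := by
        have h : y + ((z - y) :: l').sum = z + S := by rw [List.sum_cons]; ring
        rw [h]; exact hzS
      have hposl : ∀ h ∈ (z - y) :: l', 0 < h := by
        intro h hh
        rcases List.mem_cons.1 hh with h1 | h1
        · rw [h1]; linarith
        · exact hpos' h h1
      have hw := hf ((z - y) :: l') (by simp [hlen']) hposl y hyI hmem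
      have hsub : dList ((z - y) :: l') D y
          = dList ((z - y) :: l') f y - dList ((z - y) :: l') g y := by
        rw [hD, dList_sub]
      have e1 : dList ((z - y) :: l') D y = Φ z - Φ y := by
        show Φ (y + (z - y)) - Φ y = Φ z - Φ y
        rw [show y + (z - y) = z by ring]
      have e2 : dList ((z - y) :: l') g y = ψ z - ψ y := by
        show ψ (y + (z - y)) - ψ y = ψ z - ψ y
        rw [show y + (z - y) = z by ring]
      rw [e1, e2] at hsub
      linarith
    -- continuity of ψ
    have hψc : ContinuousOn ψ {w | w ∈ I ∧ w + S ∈ I} :=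
      dList_continuousOn I hord g hg l' (fun h hh => le_of_lt (hpos' h hh))
    have hxh₁J : (x + h₁) ∈ {w | w ∈ I ∧ w + S ∈ I} := by
      refine ⟨hmemI _ (by linarith) (by linarith), ?_⟩
      show x + h₁ + S ∈ I
      have h : x + h₁ + S = x + (h₁ + S) := by ring
      rw [h]; exact hxe
    have hcw : ContinuousWithinAt ψ {w | w ∈ I ∧ w + S ∈ I} (x + h₁) :=
      hψc.continuousWithinAt hxh₁J
    -- lower bound
    have hge : 0 ≤ Φ (x + h₁) - Φ x := by
      apply le_of_forall_pos_le_add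
      intro ε hε
      obtain ⟨δ, hδpos, hδ⟩ := Metric.continuousWithinAt_iff.1 hcw ε hε
      have hmin : 0 < min δ h₁ := lt_min hδpos hh₁
      obtain ⟨q, hq1, hq2⟩ := exists_rat_btwn (show h₁ - min δ h₁ < h₁ by linarith)
      have hqpos : 0 < (q : ℝ) := by
        have := min_le_right δ h₁; linarith
      have hxqS : x + q + S ∈ I := hmemI _ (by linarith) (by linarith)
      have hΦq : Φ (x + q) = Φ x :=
        F1 x (x + q) hx (by linarith) hxqS ⟨q, by push_cast; ring⟩
      have hF2 := F2 (x + q) (x + h₁) (hmemI _ (by linarith) (by linarith))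
        (by linarith) (by
          show x + h₁ + S ∈ I
          have h : x + h₁ + S = x + (h₁ + S) := by ring
          rw [h]; exact hxe)
      have hdist : dist (x + (q : ℝ)) (x + h₁) < δ := by
        rw [Real.dist_eq, abs_lt]
        have := min_le_left δ h₁
        constructor <;> linarith
      have hmemJ : (x + (q : ℝ)) ∈ {w | w ∈ I ∧ w + S ∈ I} :=
        ⟨hmemI _ (by linarith) (by linarith), hxqS⟩
      have hdg := hδ hmemJ hdist
      rw [Real.dist_eq, abs_lt] at hdg
      rw [hΦq] at hF2
      linarith
    -- upper bound
    have hle : 0 ≤ Φ x - Φ (x + h₁) := by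
      apply le_of_forall_pos_le_add
      intro ε hε
      obtain ⟨δ, hδpos, hδ⟩ := Metric.continuousWithinAt_iff.1 hcw ε hε
      obtain ⟨δ₀, hδ₀pos, hball⟩ := Metric.isOpen_iff.1 hIo (x + (h₁ + S)) hxe
      have hmin : 0 < min δ δ₀ := lt_min hδpos hδ₀pos
      obtain ⟨q, hq1, hq2⟩ := exists_rat_btwn (show h₁ < h₁ + min δ δ₀ by linarith)
      have hxqS : x + q + S ∈ I := by
        apply hball
        rw [Metric.mem_ball, Real.dist_eq, abs_lt]
        have := min_le_right δ δ₀
        constructor <;> linarith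
      have hΦq : Φ (x + q) = Φ x :=
        F1 x (x + q) hx (by linarith) hxqS ⟨q, by push_cast; ring⟩
      have hF2 := F2 (x + h₁) (x + q) (hmemI _ (by linarith) (by linarith))
        (by linarith) hxqS
      have hdist : dist (x + (q : ℝ)) (x + h₁) < δ := by
        rw [Real.dist_eq, abs_lt]
        have := min_le_left δ δ₀
        constructor <;> linarith
      have hmemJ : (x + (q : ℝ)) ∈ {w | w ∈ I ∧ w + S ∈ I} := by
        refine ⟨hord.out hx hxqS ⟨by linarith, by linarith⟩, hxqS⟩
      have hdg := hδ hmemJ hdist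
      rw [Real.dist_eq, abs_lt] at hdg
      rw [hΦq] at hF2
      linarith
    show Φ (x + h₁) - Φ x = 0
    linarith
lemma dOp_iterate (h : ℝ) (k : ℕ) (f : ℝ → ℝ) :
    (dOp h)^[k] f = dList (List.replicate k h) f := by
  induction k with
  | zero => rfl
  | succ k ih =>
    rw [Function.iterate_succ_apply', ih, List.replicate_succ]
    rfl


/-- If f is n-Wright convex, g is continuous and agrees with f on the rationals of I,
then f − g satisfies the Fréchet functional equation of order n on I. -/
theorem difference_satisfies_frechet (n : ℕ) (hn : 1 ≤ n) (I : Set ℝ)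
    (hI : ProperOpenInterval I) (f g : ℝ → ℝ) (hf : WrightConvexOrder n I f)
    (hg : ContinuousOn g I) (hfg : ∀ x ∈ I, IsRatR x → f x = g x) :
    ∀ h : ℝ, 0 < h → ∀ x : ℝ, x ∈ I → x + (n + 1) * h ∈ I →
      (dOp h)^[n + 1] (fun y => f y - g y) x = 0 := by
  intro h hh x hx hxs
  rw [dOp_iterate]
  have hsum : (List.replicate (n + 1) h).sum = (n + 1 : ℝ) * h := by
    rw [List.sum_replicate, nsmul_eq_mul]
    push_cast
    ring
  exact frechet_key n I hI.1 hI.2.1 f g hf hg hfg (List.replicate (n + 1) h)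
    (by simp) (by intro a ha; rw [List.eq_of_mem_replicate ha]; exact hh)
    x hx (by rw [hsum]; exact hxs)
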